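/- Let H_1 and H_2 be positive semidefinite Hermitian operators on a finite-dimensional Hilbert space, with ground energies a_1 and a_2 respectively, and suppose for each the gap between the ground-space energy and the next eigenvalue is more than Λ. If the angle between the two ground spaces is θ (i.e., cos θ = max{|⟨u|v⟩| : u in ground space of H_1, v in ground space of H_2, unit vectors}), then the smallest eigenvalue of H_1 + H_2 is at least a_1 + a_2 + 2Λ sin²(θ/2). -/

import Mathlib

private lemma kitaev_aux {n : ℕ}
    (H : EuclideanSpace ℂ (Fin n) →L[ℂ] EuclideanSpace ℂ (Fin n))
    (hH : IsSelfAdjoint H)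
    (G : Submodule ℂ (EuclideanSpace ℂ (Fin n)))
    (a Λ : ℝ)
    (hG : ∀ x ∈ G, H x = (a : ℂ) • x)
    (hgap : ∀ x ∈ Gᗮ, (a + Λ) * ‖x‖ ^ 2 ≤ (inner ℂ x (H x) : ℂ).re)
    (x : EuclideanSpace ℂ (Fin n)) (hx : ‖x‖ = 1) :
    a + Λ * ‖x - (G.orthogonalProjectionOnto x : EuclideanSpace ℂ (Fin n))‖ ^ 2
      ≤ (inner ℂ x (H x) : ℂ).re := by
  set u : EuclideanSpace ℂ (Fin n) := (G.orthogonalProjectionOnto x : EuclideanSpace ℂ (Fin n))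
  set w : EuclideanSpace ℂ (Fin n) := x - u with hw_def
  have hu : u ∈ G := (G.orthogonalProjectionOnto x).2
  have hw : w ∈ Gᗮ := Submodule.sub_starProjection_mem_orthogonal x
  have hx_eq : x = u + w := by rw [hw_def]; abel
  have huw : (inner ℂ u w : ℂ) = 0 := (Submodule.mem_orthogonal G w).mp hw u hu
  have hwu : (inner ℂ w u : ℂ) = 0 := by
    rw [← inner_conj_symm, huw, map_zero]
  have hHu : H u = (a : ℂ) • u := hG u hu
  have hHuw : (inner ℂ u (H w) : ℂ) = 0 := by
    have h := ContinuousLinearMap.adjoint_inner_left H w u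
    rw [hH.adjoint_eq] at h
    rw [← h, hHu, inner_smul_left, huw, mul_zero]
  have hnorm : ‖u‖ ^ 2 + ‖w‖ ^ 2 = 1 := by
    have h := norm_add_sq (𝕜 := ℂ) u w
    rw [← hx_eq, hx] at h
    simp only [RCLike.re_to_complex, huw, Complex.zero_re, mul_zero, add_zero] at h
    nlinarith
  have hexp : (inner ℂ x (H x) : ℂ) = (a : ℂ) * (‖u‖ : ℂ) ^ 2 + inner ℂ w (H w) := by
    conv_lhs => rw [hx_eq]
    rw [map_add, hHu, inner_add_left, inner_add_right, inner_add_right,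
      inner_smul_right, inner_smul_right, hwu, hHuw, inner_self_eq_norm_sq_to_K]
    norm_num
  have hgw := hgap w hw
  have hcast : ((a : ℂ) * (‖u‖ : ℂ) ^ 2) = ((a * ‖u‖ ^ 2 : ℝ) : ℂ) := by push_cast; ring
  have hre : (inner ℂ x (H x) : ℂ).re = a * ‖u‖ ^ 2 + (inner ℂ w (H w) : ℂ).re := by
    rw [hexp, hcast, Complex.add_re, Complex.ofReal_re]
  have h' : a * (‖u‖ ^ 2 + ‖w‖ ^ 2) = a := by rw [hnorm]; ring
  rw [hre]
  linarith [hgw, h', mul_le_mul_of_nonneg_left (le_refl (1:ℝ)) (le_refl (0:ℝ))]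

set_option maxHeartbeats 1600000 in
/-- **Kitaev's geometrical lemma.** Let `H₁, H₂` be positive semidefinite Hermitian
operators on a finite-dimensional Hilbert space with ground energies `a₁, a₂` and
ground spaces `G₁, G₂`, such that for each the gap between the ground-space energy and
the rest of the spectrum is at least `Λ`. If the angle `θ` between the two ground
spaces satisfies `|⟨u|v⟩| ≤ cos θ` for all unit `u ∈ G₁`, `v ∈ G₂`, then the smallest
eigenvalue of `H₁ + H₂` is at least `a₁ + a₂ + 2Λ·sin²(θ/2)`. -/
theorem kitaev_geometrical_lemma (n : ℕ)
    (H₁ H₂ : EuclideanSpace ℂ (Fin n) →L[ℂ] EuclideanSpace ℂ (Fin n))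
    (hH₁ : IsSelfAdjoint H₁) (hH₂ : IsSelfAdjoint H₂)
    (hpsd₁ : ∀ x, 0 ≤ (inner ℂ x (H₁ x) : ℂ).re)
    (hpsd₂ : ∀ x, 0 ≤ (inner ℂ x (H₂ x) : ℂ).re)
    (G₁ G₂ : Submodule ℂ (EuclideanSpace ℂ (Fin n)))
    (a₁ a₂ Λ θ : ℝ) (hΛ : 0 ≤ Λ)
    (hθ0 : 0 ≤ θ) (hθ1 : θ ≤ Real.pi / 2)
    (hG₁ : ∀ x ∈ G₁, H₁ x = (a₁ : ℂ) • x)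
    (ha₁ : ∀ x, a₁ * ‖x‖ ^ 2 ≤ (inner ℂ x (H₁ x) : ℂ).re)
    (hgap₁ : ∀ x ∈ G₁ᗮ, (a₁ + Λ) * ‖x‖ ^ 2 ≤ (inner ℂ x (H₁ x) : ℂ).re)
    (hG₂ : ∀ x ∈ G₂, H₂ x = (a₂ : ℂ) • x)
    (ha₂ : ∀ x, a₂ * ‖x‖ ^ 2 ≤ (inner ℂ x (H₂ x) : ℂ).re)
    (hgap₂ : ∀ x ∈ G₂ᗮ, (a₂ + Λ) * ‖x‖ ^ 2 ≤ (inner ℂ x (H₂ x) : ℂ).re)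
    (hangle : ∀ u ∈ G₁, ∀ v ∈ G₂, ‖u‖ = 1 → ‖v‖ = 1 →
      ‖(inner ℂ u v : ℂ)‖ ≤ Real.cos θ) :
    ∀ x : EuclideanSpace ℂ (Fin n), ‖x‖ = 1 →
      a₁ + a₂ + 2 * Λ * Real.sin (θ / 2) ^ 2 ≤ (inner ℂ x ((H₁ + H₂) x) : ℂ).re := by
  have hc : 0 ≤ Real.cos θ := Real.cos_nonneg_of_mem_Icc ⟨by linarith, hθ1⟩
  -- extend the angle bound to non-unit vectors
  have hangle' : ∀ u ∈ G₁, ∀ v ∈ G₂, ‖(inner ℂ u v : ℂ)‖ ≤ Real.cos θ * (‖u‖ * ‖v‖) := by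
    intro u hu v hv
    rcases eq_or_ne u 0 with rfl | hu0
    · simpa using mul_nonneg hc (mul_nonneg (norm_nonneg _) (norm_nonneg _))
    rcases eq_or_ne v 0 with rfl | hv0
    · simpa using mul_nonneg hc (mul_nonneg (norm_nonneg _) (norm_nonneg _))
    have hnu : (0:ℝ) < ‖u‖ := norm_pos_iff.mpr hu0
    have hnv : (0:ℝ) < ‖v‖ := norm_pos_iff.mpr hv0
    have h := hangle ((‖u‖⁻¹ : ℂ) • u) (G₁.smul_mem _ hu) ((‖v‖⁻¹ : ℂ) • v)
      (G₂.smul_mem _ hv) (by simp [norm_smul, hnu.ne']) (by simp [norm_smul, hnv.ne'])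
    have h2 : ‖(inner ℂ ((‖u‖⁻¹ : ℂ) • u) ((‖v‖⁻¹ : ℂ) • v) : ℂ)‖
        = ‖u‖⁻¹ * ‖v‖⁻¹ * ‖(inner ℂ u v : ℂ)‖ := by
      rw [inner_smul_left, inner_smul_right]
      simp only [norm_mul, RCLike.norm_conj, norm_inv, Complex.norm_real,
        Real.norm_eq_abs, abs_norm]
      ring
    rw [h2] at h
    calc ‖(inner ℂ u v : ℂ)‖
        = (‖u‖ * ‖v‖) * (‖u‖⁻¹ * ‖v‖⁻¹ * ‖(inner ℂ u v : ℂ)‖) := by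
          field_simp
    _ ≤ (‖u‖ * ‖v‖) * Real.cos θ :=
          mul_le_mul_of_nonneg_left h (by positivity)
    _ = Real.cos θ * (‖u‖ * ‖v‖) := by ring
  intro x hx
  set u : EuclideanSpace ℂ (Fin n) := (G₁.orthogonalProjectionOnto x : EuclideanSpace ℂ (Fin n))
    with hu_def
  set v : EuclideanSpace ℂ (Fin n) := (G₂.orthogonalProjectionOnto x : EuclideanSpace ℂ (Fin n))
    with hv_def
  have hu : u ∈ G₁ := (G₁.orthogonalProjectionOnto x).2
  have hv : v ∈ G₂ := (G₂.orthogonalProjectionOnto x).2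
  have hb₁ := kitaev_aux H₁ hH₁ G₁ a₁ Λ hG₁ hgap₁ x hx
  have hb₂ := kitaev_aux H₂ hH₂ G₂ a₂ Λ hG₂ hgap₂ x hx
  rw [← hu_def] at hb₁
  rw [← hv_def] at hb₂
  have hw₁ : x - u ∈ G₁ᗮ := Submodule.sub_starProjection_mem_orthogonal x
  have hw₂ : x - v ∈ G₂ᗮ := Submodule.sub_starProjection_mem_orthogonal x
  have h0u : (inner ℂ u (x - u) : ℂ) = 0 := (Submodule.mem_orthogonal G₁ _).mp hw₁ u hu
  have h0v : (inner ℂ v (x - v) : ℂ) = 0 := (Submodule.mem_orthogonal G₂ _).mp hw₂ v hv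
  have hiu : (inner ℂ x u : ℂ) = (‖u‖ : ℂ) ^ 2 := by
    have h0' : (inner ℂ (x - u) u : ℂ) = 0 := by rw [← inner_conj_symm, h0u, map_zero]
    have he : (inner ℂ x u : ℂ) = inner ℂ (x - u) u + inner ℂ u u := by
      rw [← inner_add_left, sub_add_cancel]
    rw [he, h0', inner_self_eq_norm_sq_to_K]; norm_num
  have hiv : (inner ℂ x v : ℂ) = (‖v‖ : ℂ) ^ 2 := by
    have h0' : (inner ℂ (x - v) v : ℂ) = 0 := by rw [← inner_conj_symm, h0v, map_zero]
    have he : (inner ℂ x v : ℂ) = inner ℂ (x - v) v + inner ℂ v v := by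
      rw [← inner_add_left, sub_add_cancel]
    rw [he, h0', inner_self_eq_norm_sq_to_K]; norm_num
  have hsum' : u + (x - u) = x := by abel
  have hnu1 : ‖u‖ ^ 2 + ‖x - u‖ ^ 2 = 1 := by
    have h := norm_add_sq (𝕜 := ℂ) u (x - u)
    rw [hsum', hx] at h
    simp only [RCLike.re_to_complex, h0u, Complex.zero_re, mul_zero, add_zero] at h
    nlinarith
  have hsum'' : v + (x - v) = x := by abel
  have hnv1 : ‖v‖ ^ 2 + ‖x - v‖ ^ 2 = 1 := by
    have h := norm_add_sq (𝕜 := ℂ) v (x - v)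
    rw [hsum'', hx] at h
    simp only [RCLike.re_to_complex, h0v, Complex.zero_re, mul_zero, add_zero] at h
    nlinarith
  -- key bound: ‖u‖² + ‖v‖² ≤ 1 + cos θ
  set s : ℝ := ‖u‖ ^ 2 + ‖v‖ ^ 2 with hs_def
  have hs0 : 0 ≤ s := by positivity
  have hs_le : s ≤ 1 + Real.cos θ := by
    have hxuv : (inner ℂ x (u + v) : ℂ) = (s : ℂ) := by
      rw [inner_add_right, hiu, hiv, hs_def]; push_cast; norm_num
    have h1 : s ≤ ‖u + v‖ := by
      calc s = (inner ℂ x (u + v) : ℂ).re := by rw [hxuv, Complex.ofReal_re]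
      _ ≤ ‖(inner ℂ x (u + v) : ℂ)‖ := Complex.re_le_norm _
      _ ≤ ‖x‖ * ‖u + v‖ := norm_inner_le_norm x (u + v)
      _ = ‖u + v‖ := by rw [hx, one_mul]
    have h2 : ‖u + v‖ ^ 2 ≤ s + 2 * (Real.cos θ * (‖u‖ * ‖v‖)) := by
      have h : ‖u + v‖ ^ 2 = ‖u‖ ^ 2 + 2 * (inner ℂ u v : ℂ).re + ‖v‖ ^ 2 := by
        have h0 := norm_add_sq (𝕜 := ℂ) u v
        simp only [RCLike.re_to_complex] at h0
        exact h0
      have hre : (inner ℂ u v : ℂ).re ≤ Real.cos θ * (‖u‖ * ‖v‖) :=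
        le_trans (Complex.re_le_norm _) (hangle' u hu v hv)
      linarith [h, hre, hs_def.le, hs_def.ge]
    have h3 : 2 * (‖u‖ * ‖v‖) ≤ ‖u‖ ^ 2 + ‖v‖ ^ 2 := by nlinarith [sq_nonneg (‖u‖ - ‖v‖)]
    have h4 : s * s ≤ s * (1 + Real.cos θ) := by
      nlinarith [mul_self_le_mul_self hs0 h1, h2, h3, hs_def.le, hs_def.ge]
    rcases eq_or_lt_of_le hs0 with h | h
    · linarith
    · exact le_of_mul_le_mul_left h4 h
  have hq : 2 * Λ * Real.sin (θ / 2) ^ 2 = Λ * (1 - Real.cos θ) := by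
    have h := Real.sin_sq (θ / 2)
    have h2 := Real.cos_sq (θ / 2)
    rw [h, h2, show 2 * (θ / 2) = θ by ring]; ring
  have e₁ : Λ * ‖x - u‖ ^ 2 = Λ * (1 - ‖u‖ ^ 2) := by
    have : ‖x - u‖ ^ 2 = 1 - ‖u‖ ^ 2 := by linarith
    rw [this]
  have e₂ : Λ * ‖x - v‖ ^ 2 = Λ * (1 - ‖v‖ ^ 2) := by
    have : ‖x - v‖ ^ 2 = 1 - ‖v‖ ^ 2 := by linarith
    rw [this]
  have key : Λ * (1 - Real.cos θ) ≤ Λ * ‖x - u‖ ^ 2 + Λ * ‖x - v‖ ^ 2 := by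
    rw [e₁, e₂]
    have h5 : 1 - Real.cos θ ≤ (1 - ‖u‖ ^ 2) + (1 - ‖v‖ ^ 2) := by
      rw [hs_def] at hs_le; linarith
    calc Λ * (1 - Real.cos θ) ≤ Λ * ((1 - ‖u‖ ^ 2) + (1 - ‖v‖ ^ 2)) :=
      mul_le_mul_of_nonneg_left h5 hΛ
    _ = Λ * (1 - ‖u‖ ^ 2) + Λ * (1 - ‖v‖ ^ 2) := by ring
  have hsum : (inner ℂ x ((H₁ + H₂) x) : ℂ).re
      = (inner ℂ x (H₁ x) : ℂ).re + (inner ℂ x (H₂ x) : ℂ).re := by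
    rw [ContinuousLinearMap.add_apply, inner_add_right, Complex.add_re]
  rw [hsum]
  linarith [hb₁, hb₂, key, hq]
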